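/- Let E⁺(v̂; λ̂) = Σ_{w ∈ Ŵ^Y} e^{(wλ̂, v̂)} J_w(λ̂) (absolutely convergent). Then for any simple affine root a with (a∨, λ̂) ∉ {0, ±k_a}, the function v̂ ↦ E⁺(v̂; λ̂) is invariant under the integral-reflection operator Q(s_a) = s_a ⊗ π_M(s_a) - k_a I(a) ⊗ Id: that is, Q(s_a)E⁺(·; λ̂) = E⁺(·; λ̂). The key computation uses I(a)e^{μ̂} = (e^{μ̂} - e^{s_aμ̂})/((a∨,μ̂)) and the identity s_a = (1 - k_a/(a∨,wλ̂)) J_{s_a}(wλ̂) - k_a/(a∨,wλ̂) in the localized group algebra. -/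

import Mathlib

open scoped RealInnerProductSpace

/- V̂ = V ⊕ ℝc ⊕ ℝd modeled as `V × ℝ × ℝ`.  G = Ŵ^Y is the extended affine Weyl group;
for a fixed spectral parameter λ̂ ∈ 𝔥̂⁺_reg the functional L w = (wλ̂, ·) : V̂ → ℂ encodes
wλ̂ and J w = J_w(λ̂) is the normalized-intertwiner cocycle; sa ∈ G is the simple
reflection s_a of the simple affine root a, π_sa = π_M(s_a), and
E⁺(v̂;λ̂) = Σ_{w∈Ŵ^Y} e^{(wλ̂,v̂)} J_w(λ̂) = Σ_w exp(L w v̂) • J w. -/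

/-- The bilinear form on V̂ extending the inner product by (c,d)=1, (c,c)=(d,d)=0. -/
noncomputable def BhatV {V : Type*} [NormedAddCommGroup V] [InnerProductSpace ℝ V]
    (p q : V × ℝ × ℝ) : ℝ :=
  ⟪p.1, q.1⟫ + p.2.1 * q.2.2 + p.2.2 * q.2.1

/-- Reflection s_a(v̂) = v̂ - (v̂, a∨)a, a∨ = (2/(a,a))a. -/
noncomputable def srefV {V : Type*} [NormedAddCommGroup V] [InnerProductSpace ℝ V]
    (a : V × ℝ × ℝ) (p : V × ℝ × ℝ) : V × ℝ × ℝ :=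
  p - ((2 / BhatV a a) * BhatV p a) • a

open Filter Function MeasureTheory

section AuxB
variable {V : Type*} [NormedAddCommGroup V] [InnerProductSpace ℝ V]

lemma BhatV_comm (p q : V × ℝ × ℝ) : BhatV p q = BhatV q p := by
  simp only [BhatV, real_inner_comm]; ring

lemma BhatV_smul_left (r : ℝ) (p q : V × ℝ × ℝ) : BhatV (r • p) q = r * BhatV p q := by
  simp only [BhatV, Prod.smul_fst, Prod.smul_snd, smul_eq_mul, real_inner_smul_left]; ring

lemma srefV_eq (a v : V × ℝ × ℝ) :
    srefV a v = v - (BhatV a v) • ((2 / BhatV a a) • a) := by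
  rw [srefV, smul_smul, BhatV_comm a v, mul_comm]

lemma srefV_coroot (a : V × ℝ × ℝ) (ha : BhatV a a ≠ 0) :
    srefV a ((2 / BhatV a a) • a) = -((2 / BhatV a a) • a) := by
  rw [srefV, BhatV_smul_left, ← sub_smul, ← neg_smul]
  congr 1
  field_simp
  ring

end AuxB

lemma integral_exp_sub (z c : ℂ) (hc : c ≠ 0) (b : ℝ) :
    ∫ t in (0:ℝ)..b, Complex.exp (z - t * c)
      = c⁻¹ * (Complex.exp z - Complex.exp (z - b * c)) := by
  have hderiv : ∀ t ∈ Set.uIcc (0:ℝ) b,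
      HasDerivAt (fun s : ℝ => -(c⁻¹) * Complex.exp (z - s * c))
        (Complex.exp (z - t * c)) t := by
    intro t _
    have h1 : HasDerivAt (fun s : ℝ => (s : ℂ)) 1 t := by
      simpa using (hasDerivAt_id t).ofReal_comp
    have h2 : HasDerivAt (fun s : ℝ => z - (s:ℂ) * c) (-c) t := by
      simpa using (h1.mul_const c).const_sub z
    have h3 := (h2.cexp).const_mul (-(c⁻¹))
    refine h3.congr_deriv ?_
    field_simp
  have hcont : Continuous fun t : ℝ => Complex.exp (z - t * c) := by fun_prop
  rw [intervalIntegral.integral_eq_sub_of_hasDerivAt hderiv (hcont.intervalIntegrable _ _)]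
  simp only [Complex.ofReal_zero, zero_mul, sub_zero]
  ring


lemma sum_Icc_tele {N : Type*} [AddCommGroup N] (u : ℤ → N) (n : ℕ) :
    ∑ i ∈ Finset.Icc (-(n:ℤ)) (n:ℤ), (u (i+1) - u i) = u ((n:ℤ)+1) - u (-(n:ℤ)) := by
  induction n with
  | zero => simp
  | succ m ih =>
    have h1 : Finset.Icc (-((m+1:ℕ):ℤ)) ((m+1:ℕ):ℤ)
        = insert (-((m+1:ℕ):ℤ)) (insert ((m:ℤ)+1) (Finset.Icc (-(m:ℤ)) (m:ℤ))) := by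
      ext x
      simp only [Finset.mem_Icc, Finset.mem_insert]
      omega
    have hm1 : (-((m+1:ℕ):ℤ)) ∉ insert ((m:ℤ)+1) (Finset.Icc (-(m:ℤ)) (m:ℤ)) := by
      simp only [Finset.mem_insert, Finset.mem_Icc]
      omega
    have hm2 : ((m:ℤ)+1) ∉ Finset.Icc (-(m:ℤ)) (m:ℤ) := by
      simp only [Finset.mem_Icc]; omega
    rw [h1, Finset.sum_insert hm1, Finset.sum_insert hm2, ih]
    push_cast
    abel

lemma tsum_shift_sub_eq_zero {β : Type*} {N : Type*} [NormedAddCommGroup N] [CompleteSpace N]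
    (e : Equiv.Perm β) (D : β → N)
    (hsum : Summable fun w => D (e w) - D w)
    (hlim : ∀ w : β, Function.Injective (fun n : ℤ => (e ^ n) w) →
      Filter.Tendsto (fun n : ℤ => D ((e ^ n) w)) Filter.cofinite (nhds 0)) :
    ∑' w, (D (e w) - D w) = 0 := by
  classical
  let r : Setoid β :=
    { r := fun x y => ∃ n : ℤ, (e ^ n) x = y
      iseqv :=
      { refl := fun x => ⟨0, rfl⟩
        symm := by
          rintro x y ⟨n, rfl⟩
          refine ⟨-n, ?_⟩
          rw [← Equiv.Perm.mul_apply, ← zpow_add]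
          simp
        trans := by
          rintro x y z ⟨n, rfl⟩ ⟨m, rfl⟩
          refine ⟨m + n, ?_⟩
          rw [← Equiv.Perm.mul_apply, ← zpow_add] } }
  let q : β → Quotient r := fun x => Quotient.mk r x
  let E1 := Equiv.sigmaFiberEquiv q
  have hsumE : Summable fun p : (Σ c : Quotient r, {x // q x = c}) => D (e (E1 p)) - D (E1 p) :=
    (Equiv.summable_iff E1).mpr hsum
  have hfib : ∀ c : Quotient r, (∑' x : {x // q x = c}, (D (e ↑x) - D ↑x)) = 0 := by
    intro c
    obtain ⟨w₀⟩ := c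
    show (∑' x : {x // q x = Quotient.mk r w₀}, (D (e ↑x) - D ↑x)) = 0
    have hfibsum : Summable fun x : {x // q x = Quotient.mk r w₀} => D (e ↑x) - D ↑x :=
      hsum.comp_injective Subtype.coe_injective
    have hψmem : ∀ n : ℤ, q ((e ^ n) w₀) = Quotient.mk r w₀ := by
      intro n
      refine Quotient.sound ⟨-n, ?_⟩
      rw [← Equiv.Perm.mul_apply, ← zpow_add]
      simp
    let ψ : ℤ → {x // q x = Quotient.mk r w₀} := fun n => ⟨(e ^ n) w₀, hψmem n⟩
    have hψ : Function.Surjective ψ := by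
      rintro ⟨x, hx⟩
      obtain ⟨n, hn⟩ := Quotient.exact hx
      refine ⟨-n, Subtype.ext ?_⟩
      show (e ^ (-n)) w₀ = x
      rw [← hn, ← Equiv.Perm.mul_apply, ← zpow_add]
      simp
    by_cases hinj : Function.Injective (fun n : ℤ => (e ^ n) w₀)
    · -- infinite orbit: telescoping
      have hψinj : Function.Injective ψ := fun m n hmn => hinj (congrArg Subtype.val hmn)
      let Eψ : ℤ ≃ {x // q x = Quotient.mk r w₀} := Equiv.ofBijective ψ ⟨hψinj, hψ⟩
      have hstep : ∀ n : ℤ, (e ^ (n+1)) w₀ = e ((e ^ n) w₀) := by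
        intro n
        rw [add_comm, zpow_add, zpow_one, Equiv.Perm.mul_apply]
      set u : ℤ → N := fun n => D ((e ^ n) w₀) with hu
      have hrw : ∀ n : ℤ, (D (e ↑(Eψ n)) - D ↑(Eψ n)) = u (n+1) - u n := by
        intro n
        show D (e ((e ^ n) w₀)) - D ((e ^ n) w₀) = u (n+1) - u n
        rw [hu, ← hstep]
      have hsum2 : Summable fun n : ℤ => u (n+1) - u n :=
        (((Equiv.summable_iff Eψ).mpr hfibsum).congr hrw)
      have hT := hsum2.hasSum
      have hmono : Monotone fun nn : ℕ => Finset.Icc (-(nn:ℤ)) (nn:ℤ) := by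
        intro i j hij
        exact Finset.Icc_subset_Icc (by omega) (by omega)
      have hexh : ∀ x : ℤ, ∃ nn : ℕ, x ∈ Finset.Icc (-(nn:ℤ)) (nn:ℤ) := by
        intro x
        exact ⟨x.natAbs, by simp only [Finset.mem_Icc]; omega⟩
      have htendF := tendsto_atTop_finset_of_monotone hmono hexh
      have h1 : Tendsto (fun nn : ℕ => ∑ i ∈ Finset.Icc (-(nn:ℤ)) (nn:ℤ), (u (i+1) - u i))
          atTop (nhds (∑' n : ℤ, (u (n+1) - u n))) := hT.comp htendF
      have h2 : Tendsto (fun nn : ℕ => u ((nn:ℤ)+1) - u (-(nn:ℤ)))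
          atTop (nhds (∑' n : ℤ, (u (n+1) - u n))) := by
        simpa only [sum_Icc_tele u] using h1
      have hDlim := hlim w₀ hinj
      have h3 : Tendsto (fun nn : ℕ => u ((nn:ℤ)+1)) atTop (nhds 0) := by
        have hinj1 : Function.Injective fun nn : ℕ => (nn:ℤ)+1 := by
          intro i j hij
          simp only at hij
          omega
        have := hDlim.comp hinj1.tendsto_cofinite
        rwa [Nat.cofinite_eq_atTop] at this
      have h4 : Tendsto (fun nn : ℕ => u (-(nn:ℤ))) atTop (nhds 0) := by
        have hinj1 : Function.Injective fun nn : ℕ => -(nn:ℤ) := by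
          intro i j hij
          simp only [neg_inj] at hij
          omega
        have := hDlim.comp hinj1.tendsto_cofinite
        rwa [Nat.cofinite_eq_atTop] at this
      have h5 : Tendsto (fun nn : ℕ => u ((nn:ℤ)+1) - u (-(nn:ℤ))) atTop (nhds 0) := by
        simpa using h3.sub h4
      have hzero : (∑' n : ℤ, (u (n+1) - u n)) = 0 := tendsto_nhds_unique h2 h5
      calc (∑' x : {x // q x = Quotient.mk r w₀}, (D (e ↑x) - D ↑x))
          = ∑' n : ℤ, (u (n+1) - u n) := by rw [← Equiv.tsum_eq Eψ]; exact tsum_congr hrw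
        _ = 0 := hzero
    · -- finite orbit
      obtain ⟨p1, p2, hp, hne⟩ := Function.not_injective_iff.mp hinj
      set d : ℤ := p1 - p2 with hd'
      have hd : d ≠ 0 := sub_ne_zero.mpr hne
      have hfix : (e ^ d) w₀ = w₀ := by
        have h0 : (e ^ (-p2)) ((e ^ p1) w₀) = (e ^ (-p2)) ((e ^ p2) w₀) := by rw [hp]
        rw [← Equiv.Perm.mul_apply, ← Equiv.Perm.mul_apply, ← zpow_add, ← zpow_add] at h0
        have e1 : -p2 + p1 = d := by omega
        have e2 : -p2 + p2 = 0 := by omega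
        rw [e1, e2, zpow_zero] at h0
        simpa using h0
      have hfixabs : (e ^ ((d.natAbs : ℤ))) w₀ = w₀ := by
        rcases Int.natAbs_eq d with h | h
        · rw [← h]; exact hfix
        · have h2 : ((d.natAbs:ℤ)) = -d := by omega
          rw [h2]
          have h3 := congrArg (⇑(e ^ (-d))) hfix
          rw [← Equiv.Perm.mul_apply, ← zpow_add] at h3
          simp only [neg_add_cancel, zpow_zero, Equiv.Perm.coe_one, id_eq] at h3
          exact h3.symm
      set D0 : ℤ := (d.natAbs : ℤ) with hD0'
      have hD0 : 0 < D0 := by simp only [hD0']; omega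
      have hmod : ∀ n : ℤ, ψ n = ψ (n % D0) := by
        intro n
        apply Subtype.ext
        show (e ^ n) w₀ = (e ^ (n % D0)) w₀
        have hz := Equiv.Perm.zpow_apply_eq_self_of_apply_eq_self hfixabs (n / D0)
        conv_lhs => rw [show n = n % D0 + D0 * (n / D0) from (Int.emod_add_mul_ediv n D0).symm]
        rw [zpow_add, Equiv.Perm.mul_apply, zpow_mul]
        rw [hz]
      have hfin : Finite {x // q x = Quotient.mk r w₀} := by
        refine Finite.of_surjective (fun i : Fin d.natAbs => ψ (i : ℤ)) ?_
        intro x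
        obtain ⟨n, rfl⟩ := hψ x
        have h1 : 0 ≤ n % D0 := Int.emod_nonneg n (ne_of_gt hD0)
        have h2 : n % D0 < D0 := Int.emod_lt_of_pos n hD0
        refine ⟨⟨(n % D0).toNat, by omega⟩, ?_⟩
        rw [hmod n]
        exact congrArg ψ (by simp [Int.toNat_of_nonneg h1])
      haveI := hfin
      haveI := Fintype.ofFinite {x // q x = Quotient.mk r w₀}
      rw [tsum_fintype, Finset.sum_sub_distrib]
      have hE : ∀ x : {x // q x = Quotient.mk r w₀}, q (e ↑x) = Quotient.mk r w₀ := by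
        rintro ⟨x, hx⟩
        refine Eq.trans (Quotient.sound ⟨-1, ?_⟩) hx
        show (e ^ (-1:ℤ)) (e x) = x
        rw [zpow_neg, zpow_one]
        exact e.symm_apply_apply x
      have hE' : ∀ x : {x // q x = Quotient.mk r w₀}, q (e.symm ↑x) = Quotient.mk r w₀ := by
        rintro ⟨x, hx⟩
        refine Eq.trans (Quotient.sound ⟨1, ?_⟩) hx
        show (e ^ (1:ℤ)) (e.symm x) = x
        rw [zpow_one]
        exact e.apply_symm_apply x
      let eh : {x // q x = Quotient.mk r w₀} ≃ {x // q x = Quotient.mk r w₀} :=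
        { toFun := fun x => ⟨e ↑x, hE x⟩
          invFun := fun x => ⟨e.symm ↑x, hE' x⟩
          left_inv := fun x => Subtype.ext (e.symm_apply_apply ↑x)
          right_inv := fun x => Subtype.ext (e.apply_symm_apply ↑x) }
      have hsc := Equiv.sum_comp (ι := {x // q x = Quotient.mk r w₀}) eh
        (fun x : {x // q x = Quotient.mk r w₀} => D ↑x)
      rw [sub_eq_zero]
      exact hsc
  calc (∑' w, (D (e w) - D w))
      = ∑' p : (Σ c : Quotient r, {x // q x = c}), (D (e (E1 p)) - D (E1 p)) :=
        (Equiv.tsum_eq E1 (fun w => D (e w) - D w)).symm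
    _ = ∑' (c : Quotient r), ∑' (x : {x // q x = c}), (D (e ↑x) - D ↑x) := hsumE.tsum_sigma
    _ = 0 := by simp [hfib]

set_option maxHeartbeats 1000000 in
set_option synthInstance.maxHeartbeats 100000 in
/-- the generalized Bethe wave function E⁺(·;λ̂) is invariant under the
integral-reflection operator Q(s_a) = s_a ⊗ π_M(s_a) - k_a I(a) ⊗ Id:
π_M(s_a) E⁺(s_a v̂; λ̂) - k_a ∫₀^{(a,v̂)} E⁺(v̂ - t a∨; λ̂) dt = E⁺(v̂; λ̂). -/
theorem stmt17 {V G M : Type*} [NormedAddCommGroup V] [InnerProductSpace ℝ V]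
    [Group G] [NormedAddCommGroup M] [NormedSpace ℂ M] [CompleteSpace M]
    (a : V × ℝ × ℝ) (ha : BhatV a a ≠ 0) (haff : a.2.2 = 0)
    (k : ℂ) (πa : M →L[ℂ] M) (sa : G)
    (L : G → (V × ℝ × ℝ) →ₗ[ℝ] ℂ)
    (hL : ∀ (w : G) (v : V × ℝ × ℝ), L (sa * w) v = L w (srefV a v))
    (hreg0 : ∀ w : G, L w ((2 / BhatV a a) • a) ≠ 0)
    (hregk : ∀ w : G, L w ((2 / BhatV a a) • a) ≠ k)
    (J : G → M →L[ℂ] M)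
    (hcoc : ∀ w : G, J (sa * w)
      = ((L w ((2 / BhatV a a) • a) - k)⁻¹ •
          ((L w ((2 / BhatV a a) • a)) • πa + k • (1 : M →L[ℂ] M))) * J w)
    (hconv : ∀ v : V × ℝ × ℝ, ∃ g : G → ℝ, Summable g ∧ ∀ w : G,
      ∀ t ∈ Set.uIcc (0 : ℝ) (BhatV a v),
        ‖Complex.exp (L w (v - t • ((2 / BhatV a a) • a))) • J w‖ ≤ g w) :
    ∀ v : V × ℝ × ℝ,
      πa * (∑' w : G, Complex.exp (L w (srefV a v)) • J w)
        - k • (∫ t in (0:ℝ)..(BhatV a v),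
            ∑' w : G, Complex.exp (L w (v - t • ((2 / BhatV a a) • a))) • J w)
        = ∑' w : G, Complex.exp (L w v) • J w := by
  intro v
  set α : V × ℝ × ℝ := (2 / BhatV a a) • a with hα
  set b : ℝ := BhatV a v with hb
  obtain ⟨g, hg, hbd⟩ := hconv v
  -- basic linear-algebra facts
  have hLlin : ∀ (w : G) (t : ℝ), L w (v - t • α) = L w v - (t:ℂ) * L w α := by
    intro w t
    rw [map_sub, LinearMap.map_smul, Complex.real_smul]
  have hsv : srefV a v = v - b • α := by
    rw [srefV_eq]
  have hes : ∀ w : G, L w (srefV a v) = L w v - (b:ℂ) * L w α := by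
    intro w
    rw [hsv]; exact hLlin w b
  have hcs : ∀ u : G, L (sa * u) α = - L u α := by
    intro u
    rw [hL u α, hα, srefV_coroot a ha, map_neg]
  have hcs' : ∀ u : G, L (sa⁻¹ * u) α = - L u α := by
    intro u
    have h1 := hcs (sa⁻¹ * u)
    rw [mul_inv_cancel_left] at h1
    rw [h1, neg_neg]
  -- summability facts
  have h0mem : (0:ℝ) ∈ Set.uIcc (0:ℝ) b := Set.left_mem_uIcc
  have hbmem : b ∈ Set.uIcc (0:ℝ) b := Set.right_mem_uIcc
  have hgnn : ∀ w, 0 ≤ g w := fun w => le_trans (norm_nonneg _) (hbd w 0 h0mem)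
  have hfbd : ∀ (w : G), ∀ t ∈ Set.uIcc (0:ℝ) b,
      ‖Complex.exp (L w v - (t:ℂ) * L w α) • J w‖ ≤ g w := by
    intro w t ht
    rw [← hLlin]
    exact hbd w t ht
  have hzero : ∀ w : G, g w = 0 → ∀ t ∈ Set.uIcc (0:ℝ) b,
      Complex.exp (L w v - (t:ℂ) * L w α) • J w = 0 := by
    intro w hw t ht
    have := hfbd w t ht
    rw [hw] at this
    exact norm_le_zero_iff.mp this
  have hF : Summable fun w : G => Complex.exp (L w v) • J w := by
    refine Summable.of_norm_bounded hg fun w => ?_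
    simpa using hbd w 0 h0mem
  have hFs : Summable fun w : G => Complex.exp (L w (srefV a v)) • J w := by
    refine Summable.of_norm_bounded hg fun w => ?_
    rw [hsv]
    exact hbd w b hbmem
  -- continuity of integrands
  have hcont : ∀ w : G, Continuous fun t : ℝ =>
      Complex.exp (L w v - (t:ℂ) * L w α) • J w := by
    intro w
    exact (Complex.continuous_exp.comp (by fun_prop)).smul continuous_const
  -- pointwise value of the interval integral
  have hIw : ∀ w : G, (∫ t in (0:ℝ)..b, Complex.exp (L w v - (t:ℂ) * L w α) • J w)
      = ((L w α)⁻¹ * (Complex.exp (L w v) - Complex.exp (L w (srefV a v)))) • J w := by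
    intro w
    rw [intervalIntegral.integral_smul_const, integral_exp_sub _ _ (hreg0 w) b, ← hes w]
  -- the integral/sum swap
  have hswap : (∫ t in (0:ℝ)..b, ∑' w : G, Complex.exp (L w (v - t • α)) • J w)
      = ∑' w : G, ((L w α)⁻¹ * (Complex.exp (L w v) - Complex.exp (L w (srefV a v)))) • J w := by
    set s : Set G := Function.support g with hsdef
    haveI : Countable s := (hg.countable_support).to_subtype
    have hsupp : ∀ t ∈ Set.uIcc (0:ℝ) b,
        (Function.support fun w : G => Complex.exp (L w v - (t:ℂ) * L w α) • J w) ⊆ s := by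
      intro t ht w hw
      by_contra hws
      exact hw (hzero w (Function.notMem_support.mp hws) t ht)
    have e1 : (∫ t in (0:ℝ)..b, ∑' w : G, Complex.exp (L w (v - t • α)) • J w)
        = ∫ t in (0:ℝ)..b, ∑' w : s, Complex.exp (L (w:G) v - (t:ℂ) * L (w:G) α) • J (w:G) := by
      refine intervalIntegral.integral_congr fun t ht => ?_
      simp only [hLlin]
      exact (tsum_subtype_eq_of_support_subset (hsupp t ht)).symm
    have hmeas : ∀ w : s, AEStronglyMeasurable
        (fun t : ℝ => Complex.exp (L (w:G) v - (t:ℂ) * L (w:G) α) • J (w:G))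
        (volume.restrict (Set.uIoc (0:ℝ) b)) := fun w => (hcont (w:G)).stronglyMeasurable.aestronglyMeasurable
    have hvol : volume (Set.uIoc (0:ℝ) b) = ENNReal.ofReal |b| := by
      rw [Set.uIoc, Real.volume_Ioc]
      congr 1
      rw [max_sub_min_eq_abs, sub_zero]
    have hfinlt : (∑' w : s, ∫⁻ t in Set.uIoc (0:ℝ) b,
        ‖Complex.exp (L (w:G) v - (t:ℂ) * L (w:G) α) • J (w:G)‖₊ ∂volume) ≠ ⊤ := by
      have hble : ∀ w : s, (∫⁻ t in Set.uIoc (0:ℝ) b,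
          ‖Complex.exp (L (w:G) v - (t:ℂ) * L (w:G) α) • J (w:G)‖₊ ∂volume)
            ≤ ENNReal.ofReal (g w * |b|) := by
        intro w
        have hle : ∀ t ∈ Set.uIoc (0:ℝ) b,
            (‖Complex.exp (L (w:G) v - (t:ℂ) * L (w:G) α) • J (w:G)‖₊ : ENNReal)
              ≤ ENNReal.ofReal (g w) := by
          intro t ht
          change ‖Complex.exp (L (w:G) v - (t:ℂ) * L (w:G) α) • J (w:G)‖ₑ ≤ _
          rw [← ofReal_norm]
          exact ENNReal.ofReal_le_ofReal (hfbd _ t (Set.uIoc_subset_uIcc ht))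
        calc (∫⁻ t in Set.uIoc (0:ℝ) b,
            ‖Complex.exp (L (w:G) v - (t:ℂ) * L (w:G) α) • J (w:G)‖₊ ∂volume)
            ≤ ∫⁻ _t in Set.uIoc (0:ℝ) b, ENNReal.ofReal (g w) ∂volume :=
              setLIntegral_mono measurable_const hle
          _ = ENNReal.ofReal (g w) * volume (Set.uIoc (0:ℝ) b) := setLIntegral_const _ _
          _ = ENNReal.ofReal (g w) * ENNReal.ofReal |b| := by rw [hvol]
          _ = ENNReal.ofReal (g w * |b|) := (ENNReal.ofReal_mul (hgnn _)).symm
      have hne : (∑' w : s, ENNReal.ofReal (g (w:G) * |b|)) ≠ ⊤ := by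
        rw [← ENNReal.ofReal_tsum_of_nonneg (f := fun w : s => g (w:G) * |b|) (fun w => mul_nonneg (hgnn _) (abs_nonneg _))
          ((hg.mul_right |b|).subtype s)]
        exact ENNReal.ofReal_ne_top
      exact ne_top_of_le_ne_top hne (ENNReal.tsum_le_tsum hble)
    have hsgn : ∀ w : G, (if (0:ℝ) ≤ b then (1:ℝ) else -1) •
        (∫ t in Set.uIoc (0:ℝ) b, Complex.exp (L w v - (t:ℂ) * L w α) • J w ∂volume)
        = ((L w α)⁻¹ * (Complex.exp (L w v) - Complex.exp (L w (srefV a v)))) • J w := by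
      intro w
      rw [← intervalIntegral.intervalIntegral_eq_integral_uIoc, hIw w]
    have hsupp3 : (Function.support fun w : G =>
        ((L w α)⁻¹ * (Complex.exp (L w v) - Complex.exp (L w (srefV a v)))) • J w) ⊆ s := by
      intro w hw
      by_contra hws
      apply hw
      show ((L w α)⁻¹ * (Complex.exp (L w v) - Complex.exp (L w (srefV a v)))) • J w = 0
      rw [← hsgn w]
      have h0 : (∫ t in Set.uIoc (0:ℝ) b,
          Complex.exp (L w v - (t:ℂ) * L w α) • J w ∂volume) = 0 := by
        rw [setIntegral_congr_fun measurableSet_uIoc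
          (fun t ht => hzero w (Function.notMem_support.mp hws) t (Set.uIoc_subset_uIcc ht)),
          integral_zero]
      rw [h0, smul_zero]
    rw [e1, intervalIntegral.intervalIntegral_eq_integral_uIoc,
      MeasureTheory.integral_tsum hmeas hfinlt, ← tsum_const_smul'' _]
    calc (∑' w : s, (if (0:ℝ) ≤ b then (1:ℝ) else -1) •
          (∫ t in Set.uIoc (0:ℝ) b, Complex.exp (L (w:G) v - (t:ℂ) * L (w:G) α) • J (w:G) ∂volume))
        = ∑' w : s, ((L (w:G) α)⁻¹ *
            (Complex.exp (L (w:G) v) - Complex.exp (L (w:G) (srefV a v)))) • J (w:G) :=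
          tsum_congr fun w => hsgn (w:G)
      _ = ∑' w : G, ((L w α)⁻¹ *
            (Complex.exp (L w v) - Complex.exp (L w (srefV a v)))) • J w :=
          tsum_subtype_eq_of_support_subset hsupp3
  -- summability of the closed-form integral terms
  have hIsum : Summable fun w : G =>
      ((L w α)⁻¹ * (Complex.exp (L w v) - Complex.exp (L w (srefV a v)))) • J w := by
    refine Summable.of_norm_bounded (hg.mul_right |b|) fun w => ?_
    rw [← hIw w]
    have := intervalIntegral.norm_integral_le_of_norm_le_const (a := (0:ℝ)) (b := b)
      (C := g w) (f := fun t : ℝ => Complex.exp (L w v - (t:ℂ) * L w α) • J w)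
      (fun t ht => hfbd w t (Set.uIoc_subset_uIcc ht))
    simpa using this
  have hkI : Summable fun w : G =>
      k • (((L w α)⁻¹ * (Complex.exp (L w v) - Complex.exp (L w (srefV a v)))) • J w) :=
    hIsum.const_smul k
  have hPsum : Summable fun w : G => Complex.exp (L w (srefV a v)) • (πa * J w) := by
    refine (hFs.mul_left πa).congr fun w => ?_
    exact mul_smul_comm _ _ _
  have hFσ : Summable fun w : G => Complex.exp (L (sa * w) v) • J (sa * w) := by
    have h1 := ((Equiv.mulLeft sa).summable_iff
      (f := fun w : G => Complex.exp (L w v) • J w)).mpr hF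
    refine h1.congr fun w => ?_
    simp [Function.comp, Equiv.coe_mulLeft]
  -- the key termwise identity
  have key : ∀ w : G,
      Complex.exp (L w (srefV a v)) • (πa * J w)
        - k • (((L w α)⁻¹ * (Complex.exp (L w v) - Complex.exp (L w (srefV a v)))) • J w)
      = Complex.exp (L (sa * w) v) • J (sa * w)
        + ((k * (L (sa * w) α)⁻¹ * Complex.exp (L (sa * w) v)) • J (sa * w)
            - (k * (L w α)⁻¹ * Complex.exp (L w v)) • J w) := by
    intro w
    have hc0 : L w α ≠ 0 := hreg0 w
    have hck : L w α - k ≠ 0 := sub_ne_zero.mpr (hregk w)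
    rw [hcoc w, hL w v, hcs w]
    rw [smul_mul_assoc, add_mul, smul_mul_assoc, smul_mul_assoc, one_mul]
    match_scalars <;> (field_simp; try ring)
  have hDdsub : Summable fun w : G =>
      ((k * (L (sa * w) α)⁻¹ * Complex.exp (L (sa * w) v)) • J (sa * w)
        - (k * (L w α)⁻¹ * Complex.exp (L w v)) • J w) := by
    refine ((hPsum.sub hkI).sub hFσ).congr fun w => ?_
    rw [key w]
    exact add_sub_cancel_left _ _
  -- the telescoping sum vanishes
  have horb : (∑' w : G, ((k * (L (sa * w) α)⁻¹ * Complex.exp (L (sa * w) v)) • J (sa * w)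
      - (k * (L w α)⁻¹ * Complex.exp (L w v)) • J w)) = 0 := by
    have happly : ∀ (n : ℤ) (w₀ : G),
        (((Equiv.mulLeft sa) ^ (n+1) : Equiv.Perm G)) w₀
          = sa * ((((Equiv.mulLeft sa) ^ n : Equiv.Perm G)) w₀) := by
      intro n w₀
      rw [add_comm, zpow_add, zpow_one, Equiv.Perm.mul_apply, Equiv.coe_mulLeft]
    have happly' : ∀ (n : ℤ) (w₀ : G),
        (((Equiv.mulLeft sa) ^ (n-1) : Equiv.Perm G)) w₀
          = sa⁻¹ * ((((Equiv.mulLeft sa) ^ n : Equiv.Perm G)) w₀) := by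
      intro n w₀
      have h1 : n - 1 = -1 + n := by ring
      rw [h1, zpow_add, Equiv.Perm.mul_apply, zpow_neg, zpow_one, Equiv.Perm.inv_def,
        Equiv.mulLeft_symm, Equiv.coe_mulLeft]
    have hsign : ∀ (w₀ : G) (n : ℤ),
        L ((((Equiv.mulLeft sa) ^ n : Equiv.Perm G)) w₀) α = L w₀ α ∨
        L ((((Equiv.mulLeft sa) ^ n : Equiv.Perm G)) w₀) α = -L w₀ α := by
      intro w₀ n
      induction n using Int.induction_on with
      | zero => left; simp
      | succ i ih =>
        rw [happly, hcs]
        rcases ih with h | h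
        · right; rw [h]
        · left; rw [h, neg_neg]
      | pred i ih =>
        rw [happly', hcs']
        rcases ih with h | h
        · right; rw [h]
        · left; rw [h, neg_neg]
    have hs1 : Summable fun w : G =>
        ((fun u : G => (k * (L u α)⁻¹ * Complex.exp (L u v)) • J u) ((Equiv.mulLeft sa) w)
          - (fun u : G => (k * (L u α)⁻¹ * Complex.exp (L u v)) • J u) w) := by
      simpa only [Equiv.coe_mulLeft] using hDdsub
    have hlim2 : ∀ w₀ : G, Function.Injective (fun n : ℤ => (((Equiv.mulLeft sa) ^ n : Equiv.Perm G)) w₀) →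
        Filter.Tendsto (fun n : ℤ =>
          (fun u : G => (k * (L u α)⁻¹ * Complex.exp (L u v)) • J u)
            ((((Equiv.mulLeft sa) ^ n : Equiv.Perm G)) w₀)) Filter.cofinite (nhds 0) := by
      intro w₀ hinj
      have hFcomp : Tendsto (fun n : ℤ =>
          Complex.exp (L ((((Equiv.mulLeft sa) ^ n : Equiv.Perm G)) w₀) v) •
            J ((((Equiv.mulLeft sa) ^ n : Equiv.Perm G)) w₀)) cofinite (nhds 0) :=
        hF.tendsto_cofinite_zero.comp hinj.tendsto_cofinite
      refine squeeze_zero_norm (a := fun n : ℤ => (‖k‖ * ‖L w₀ α‖⁻¹) *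
        ‖Complex.exp (L ((((Equiv.mulLeft sa) ^ n : Equiv.Perm G)) w₀) v) •
          J ((((Equiv.mulLeft sa) ^ n : Equiv.Perm G)) w₀)‖) (fun n => ?_) ?_
      · set u : G := (((Equiv.mulLeft sa) ^ n : Equiv.Perm G)) w₀ with hu
        have habs : ‖L u α‖ = ‖L w₀ α‖ := by
          rcases hsign w₀ n with h | h
          · rw [← hu] at h; rw [h]
          · rw [← hu] at h; rw [h, norm_neg]
        show ‖(k * (L u α)⁻¹ * Complex.exp (L u v)) • J u‖
          ≤ ‖k‖ * ‖L w₀ α‖⁻¹ * ‖Complex.exp (L u v) • J u‖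
        have e1 : ‖(k * (L u α)⁻¹ * Complex.exp (L u v)) • J u‖
            = ‖k * (L u α)⁻¹ * Complex.exp (L u v)‖ * ‖J u‖ := by
              exact norm_smul (k * (L u α)⁻¹ * Complex.exp (L u v)) (J u)
        have e2 : ‖Complex.exp (L u v) • J u‖ = ‖Complex.exp (L u v)‖ * ‖J u‖ := by
          exact norm_smul (Complex.exp (L u v)) (J u)
        rw [e1, e2, norm_mul, norm_mul, norm_inv, habs]
        exact le_of_eq (by ring)
      · simpa using (hFcomp.norm.const_mul (‖k‖ * ‖L w₀ α‖⁻¹))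
    have hmain := tsum_shift_sub_eq_zero (Equiv.mulLeft sa)
      (fun u : G => (k * (L u α)⁻¹ * Complex.exp (L u v)) • J u) hs1 hlim2
    simpa only [Equiv.coe_mulLeft] using hmain
  -- final assembly
  rw [hswap]
  calc πa * (∑' w : G, Complex.exp (L w (srefV a v)) • J w)
      - k • (∑' w : G, ((L w α)⁻¹ *
          (Complex.exp (L w v) - Complex.exp (L w (srefV a v)))) • J w)
      = (∑' w : G, Complex.exp (L w (srefV a v)) • (πa * J w))
        - ∑' w : G, k • (((L w α)⁻¹ *
            (Complex.exp (L w v) - Complex.exp (L w (srefV a v)))) • J w) := by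
        rw [← Summable.tsum_mul_left πa hFs, ← Summable.tsum_const_smul k hIsum]
        congr 1
        exact tsum_congr fun w => mul_smul_comm _ _ _
    _ = ∑' w : G, (Complex.exp (L w (srefV a v)) • (πa * J w)
          - k • (((L w α)⁻¹ *
              (Complex.exp (L w v) - Complex.exp (L w (srefV a v)))) • J w)) :=
        (Summable.tsum_sub hPsum hkI).symm
    _ = ∑' w : G, (Complex.exp (L (sa * w) v) • J (sa * w)
          + ((k * (L (sa * w) α)⁻¹ * Complex.exp (L (sa * w) v)) • J (sa * w)
              - (k * (L w α)⁻¹ * Complex.exp (L w v)) • J w)) := tsum_congr key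
    _ = (∑' w : G, Complex.exp (L (sa * w) v) • J (sa * w))
          + ∑' w : G, ((k * (L (sa * w) α)⁻¹ * Complex.exp (L (sa * w) v)) • J (sa * w)
              - (k * (L w α)⁻¹ * Complex.exp (L w v)) • J w) := Summable.tsum_add hFσ hDdsub
    _ = ∑' w : G, Complex.exp (L w v) • J w := by
        rw [horb, add_zero]
        have h2 := Equiv.tsum_eq (Equiv.mulLeft sa) (fun w : G => Complex.exp (L w v) • J w)
        simpa only [Equiv.coe_mulLeft] using h2
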